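/- arXiv:2506.07846 — 2 statements merged into one kernel-verified Lean document; each statement's English description precedes it below -/
import Mathlib

section
/- An [n,k,d] Griesmer code over F_q is projective (i.e., no two columns of its generator matrix are proportional) if and only if d ≤ q^{k−1}. -/
set_option linter.unusedSectionVars false

/-- Hamming weight of a vector. -/
noncomputable def wt {ι F : Type*} [Zero F] (c : ι → F) : ℕ :=
  Nat.card {i // c i ≠ 0}

/-- Griesmer sum `g_q(k,d) = ∑_{i<k} ⌈d / q^i⌉` (using `(d + q^i - 1)/q^i`). -/
def gbound (q k d : ℕ) : ℕ :=
  ∑ i ∈ Finset.range k, (d + q ^ i - 1) / q ^ i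

/-- ceiling division -/
def cdiv (d m : ℕ) : ℕ := (d + m - 1) / m

lemma wt_pos {ι F : Type*} [Zero F] [Fintype ι] {c : ι → F} (hc : c ≠ 0) : 1 ≤ wt c := by
  classical
  obtain ⟨i, hi⟩ := Function.ne_iff.mp hc
  rw [wt, Nat.card_eq_fintype_card]
  exact Fintype.card_pos_iff.mpr ⟨⟨i, hi⟩⟩

lemma gbound_eq (q k d : ℕ) : gbound q k d = ∑ i ∈ Finset.range k, cdiv d (q ^ i) := rfl

lemma cdiv_mono {d d' : ℕ} (m : ℕ) (h : d ≤ d') : cdiv d m ≤ cdiv d' m :=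
  Nat.div_le_div_right (Nat.sub_le_sub_right (Nat.add_le_add_right h m) 1)

lemma gbound_mono (q k : ℕ) {d d' : ℕ} (h : d ≤ d') : gbound q k d ≤ gbound q k d' := by
  rw [gbound_eq, gbound_eq]
  exact Finset.sum_le_sum fun i _ => cdiv_mono _ h

lemma cdiv_cdiv (q : ℕ) (hq : 1 ≤ q) (d i : ℕ) :
    cdiv d (q ^ (i + 1)) = cdiv (cdiv d q) (q ^ i) := by
  have hqi : 0 < q ^ i := Nat.pow_pos hq
  have hqi1 : 0 < q ^ (i + 1) := Nat.pow_pos hq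
  rcases d with _ | d'
  · simp [cdiv, Nat.div_eq_of_lt, hqi, hqi1, Nat.sub_lt hqi1, Nat.sub_lt hqi,
      Nat.div_eq_of_lt (Nat.sub_lt hq Nat.one_pos)]
  · have h1 : cdiv (d' + 1) q = d' / q + 1 := by
      have : d' + 1 + q - 1 = d' + q := by omega
      rw [cdiv, this, Nat.add_div_right _ hq]
    have h2 : d' + 1 + q ^ (i+1) - 1 = d' + q ^ (i+1) := by omega
    have h3 : d' / q + 1 + q ^ i - 1 = d' / q + q ^ i := by omega
    rw [cdiv, h2, Nat.add_div_right _ hqi1, h1, cdiv, h3, Nat.add_div_right _ hqi,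
      Nat.div_div_eq_div_mul, ← pow_succ']

lemma gbound_succ (q : ℕ) (hq : 1 ≤ q) (k d : ℕ) :
    (∑ i ∈ Finset.range (k+1), cdiv d (q ^ i)) = d + ∑ i ∈ Finset.range k, cdiv (cdiv d q) (q ^ i) := by
  rw [Finset.sum_range_succ' (fun i => cdiv d (q ^ i)) k]
  simp only [cdiv_cdiv q hq d]
  rw [add_comm]
  congr 1
  simp [cdiv]

section
variable {F : Type*} [Field F] [Fintype F] {ι : Type*} [Fintype ι]

lemma wt_eq_filter (c : ι → F) [DecidablePred fun i => c i ≠ 0] :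
    wt c = (Finset.univ.filter fun i => c i ≠ 0).card := by
  rw [wt, Nat.card_eq_fintype_card, Fintype.card_subtype]

lemma wt_restrict (p : ι → Prop) (v : ι → F) :
    wt (fun i : {i // p i} => v i) = Nat.card {i : ι // p i ∧ v i ≠ 0} := by
  rw [wt]
  exact Nat.card_congr (Equiv.subtypeSubtypeEquivSubtypeInter p (fun i => v i ≠ 0))

lemma residual_key (u v : ι → F) (hw : 1 ≤ wt u)
    (h : ∀ α : F, v ≠ α • u → wt u ≤ wt (v - α • u)) :
    (∃ α : F, v = α • u) ∨
      cdiv (wt u) (Fintype.card F) ≤ wt (fun i : {i // u i = 0} => v i) := by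
  classical
  set q := Fintype.card F with hq
  set w := wt u with hwdef
  set e := cdiv w q with he
  have hq1 : 1 ≤ q := Fintype.card_pos
  have hs : (Finset.univ.filter fun i => u i ≠ 0).card = w := (wt_eq_filter u).symm
  set s : Finset ι := Finset.univ.filter fun i => u i ≠ 0 with hsdef
  -- pigeonhole
  obtain ⟨α, hα⟩ : ∃ α : F, e ≤ (s.filter fun i => v i * (u i)⁻¹ = α).card := by
    by_contra hcon
    push_neg at hcon
    have hsum : s.card = ∑ α ∈ (Finset.univ : Finset F),
        (s.filter fun i => v i * (u i)⁻¹ = α).card :=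
      Finset.card_eq_sum_card_fiberwise (fun x _ => Finset.mem_univ _)
    have he1 : 1 ≤ e := by
      rw [he, cdiv, Nat.one_le_div_iff hq1]; omega
    have hmul : q * e ≤ w + q - 1 := by
      rw [he, cdiv, mul_comm]; exact Nat.div_mul_le_self _ _
    have hle : ∑ α ∈ (Finset.univ : Finset F),
        (s.filter fun i => v i * (u i)⁻¹ = α).card ≤ q * (e - 1) := by
      calc _ ≤ ∑ _α ∈ (Finset.univ : Finset F), (e - 1) :=
            Finset.sum_le_sum fun α _ => by have := hcon α; omega
        _ = q * (e - 1) := by rw [Finset.sum_const, smul_eq_mul, Finset.card_univ]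
    have h2 : q * (e - 1) + q = q * e := by
      zify [he1]; ring
    rw [hs] at hsum
    omega
  set fib := s.filter fun i => v i * (u i)⁻¹ = α with hfib
  by_cases hva : v = α • u
  · exact Or.inl ⟨α, hva⟩
  right
  have hd : w ≤ wt (v - α • u) := h α hva
  have hwt2 : wt (v - α • u) = (Finset.univ.filter fun i => v i - α * u i ≠ 0).card := by
    rw [wt_eq_filter]
    congr 1
  set s0 : Finset ι := Finset.univ.filter fun i => u i = 0 ∧ v i ≠ 0 with hs0
  have hsub : (Finset.univ.filter fun i => v i - α * u i ≠ 0) ⊆ s0 ∪ (s \ fib) := by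
    intro i hi
    simp only [Finset.mem_filter, Finset.mem_univ, true_and] at hi
    by_cases hui : u i = 0
    · refine Finset.mem_union_left _ ?_
      simp only [hs0, Finset.mem_filter, Finset.mem_univ, true_and]
      refine ⟨hui, ?_⟩
      intro hv; apply hi; rw [hv, hui, mul_zero, sub_zero]
    · refine Finset.mem_union_right _ ?_
      simp only [Finset.mem_sdiff, hfib, hsdef, Finset.mem_filter, Finset.mem_univ, true_and]
      refine ⟨hui, ?_⟩
      rintro ⟨-, hvi⟩
      apply hi
      have : v i = α * u i := by
        field_simp at hvi
        linear_combination hvi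
      rw [this]; ring
  have hfibsub : fib ⊆ s := Finset.filter_subset _ _
  have hcount : wt (v - α • u) ≤ s0.card + (w - fib.card) := by
    rw [hwt2]
    calc _ ≤ (s0 ∪ (s \ fib)).card := Finset.card_le_card hsub
      _ ≤ s0.card + (s \ fib).card := Finset.card_union_le _ _
      _ = s0.card + (s.card - fib.card) := by rw [Finset.card_sdiff_of_subset hfibsub]
      _ = s0.card + (w - fib.card) := by rw [hs]
  have hfibw : fib.card ≤ w := by rw [← hs]; exact Finset.card_le_card hfibsub
  have hres : wt (fun i : {i // u i = 0} => v i) = s0.card := by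
    rw [wt_restrict, Nat.card_eq_fintype_card, Fintype.card_subtype]
  rw [hres]
  omega
end

lemma exists_inj_ker {F : Type*} [Field F] {m : ℕ} (ℓ : (Fin (m+1) → F) →ₗ[F] F) :
    ∃ g : (Fin m → F) →ₗ[F] (Fin (m+1) → F),
      (∀ b, g b = 0 → b = 0) ∧ ∀ b, g b ∈ LinearMap.ker ℓ := by
  classical
  have hrk : m ≤ Module.finrank F ↥(LinearMap.ker ℓ) := by
    have h := LinearMap.finrank_range_add_finrank_ker ℓ
    rw [Module.finrank_fin_fun] at h
    have hr1 : Module.finrank F ↥(LinearMap.range ℓ) ≤ 1 := by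
      calc Module.finrank F ↥(LinearMap.range ℓ) ≤ Module.finrank F F :=
            Submodule.finrank_le _
        _ = 1 := Module.finrank_self F
    omega
  set β := Module.finBasis F ↥(LinearMap.ker ℓ) with hβ
  set V : Fin m → (Fin (m+1) → F) := fun i => (β (Fin.castLE hrk i) : Fin (m+1) → F) with hV
  have hVmem : ∀ i, V i ∈ LinearMap.ker ℓ := fun i => (β (Fin.castLE hrk i)).2
  have hVli : LinearIndependent F V := by
    have h1 := β.linearIndependent.comp (Fin.castLE hrk) (Fin.castLE_injective hrk)
    exact h1.map' (LinearMap.ker ℓ).subtype (Submodule.ker_subtype _)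
  refine ⟨{ toFun := fun b => ∑ i, b i • V i
            map_add' := by intro b1 b2; simp [add_smul, Finset.sum_add_distrib]
            map_smul' := by intro c b; simp [smul_smul, Finset.smul_sum] }, ?_, ?_⟩
  · intro b hb
    funext i
    exact Fintype.linearIndependent_iff.mp hVli b hb i
  · intro b
    show ∑ i, b i • V i ∈ LinearMap.ker ℓ
    exact Submodule.sum_mem _ fun i _ => Submodule.smul_mem _ _ (hVmem i)

theorem griesmer {F : Type*} [Field F] [Fintype F] :
    ∀ (k : ℕ) {ι : Type} [Fintype ι] (d : ℕ) (f : (Fin k → F) →ₗ[F] (ι → F)),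
      Function.Injective f → (∀ a, a ≠ 0 → d ≤ wt (f a)) →
      gbound (Fintype.card F) k d ≤ Fintype.card ι := by
  intro k
  induction k with
  | zero => intro ι _ d f _ _; simp [gbound]
  | succ k ih =>
    intro ι _ d f hinj hd
    classical
    set q := Fintype.card F with hqdef
    have hq1 : 1 ≤ q := Fintype.card_pos
    -- minimal weight nonzero codeword
    have hne : ((Finset.univ : Finset (Fin (k+1) → F)).filter fun a => a ≠ 0).Nonempty := by
      refine ⟨Pi.single 0 1, ?_⟩
      simp only [Finset.mem_filter, Finset.mem_univ, true_and]
      intro h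
      have := congrFun h 0
      simp [Pi.single_eq_same] at this
    obtain ⟨c, hcmem, hcmin⟩ := Finset.exists_min_image _ (fun a => wt (f a)) hne
    simp only [Finset.mem_filter, Finset.mem_univ, true_and] at hcmem
    have hcmin' : ∀ a : Fin (k+1) → F, a ≠ 0 → wt (f c) ≤ wt (f a) := fun a ha =>
      hcmin a (by simp [Finset.mem_filter, ha])
    set u := f c with hu
    have hfc0 : u ≠ 0 := fun h => hcmem (hinj (h.trans (map_zero f).symm))
    have hw1 : 1 ≤ wt u := wt_pos hfc0
    have hdw : d ≤ wt u := hd c hcmem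
    obtain ⟨i0, hi0pre⟩ := Function.ne_iff.mp hcmem
    have hi0 : c i0 ≠ 0 := hi0pre
    -- the automorphism T sending e_{i0} to c
    set vE : Fin (k+1) → F := c - Pi.single i0 1 with hvE
    set T : (Fin (k+1) → F) →ₗ[F] (Fin (k+1) → F) :=
      LinearMap.id + (LinearMap.proj i0).smulRight vE with hT
    have hTapply : ∀ x, T x = x + x i0 • vE := fun x => rfl
    have hTinj : Function.Injective T := by
      have h0 : ∀ x, T x = 0 → x = 0 := by
        intro x hx
        have h1 : x i0 + x i0 * (c i0 - 1) = 0 := by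
          have := congrFun hx i0
          simpa [hTapply, hvE, Pi.single_eq_same, smul_eq_mul] using this
        have h2 : x i0 * c i0 = 0 := by linear_combination h1
        have h3 : x i0 = 0 := by
          rcases mul_eq_zero.mp h2 with h | h
          · exact h
          · exact absurd h hi0
        have : T x = x := by rw [hTapply, h3, zero_smul, add_zero]
        rw [← this, hx]
      intro x y hxy
      have := h0 (x - y) (by rw [map_sub, hxy, sub_self])
      exact sub_eq_zero.mp this
    have hTc : T (Pi.single i0 1) = c := by
      funext j
      simp [hTapply, hvE, Pi.single_eq_same, smul_eq_mul]
    -- the embedding E inserting 0 at position i0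
    set E : (Fin k → F) →ₗ[F] (Fin (k+1) → F) :=
      { toFun := fun b => i0.insertNth 0 b
        map_add' := by
          intro b1 b2; funext j
          refine Fin.succAboveCases i0 ?_ ?_ j <;> simp
        map_smul' := by
          intro m b; funext j
          refine Fin.succAboveCases i0 ?_ ?_ j <;> simp } with hE
    have hEapply : ∀ b, E b = i0.insertNth 0 b := fun _ => rfl
    -- residual code
    set f' : (Fin k → F) →ₗ[F] ({i : ι // u i = 0} → F) :=
      (LinearMap.funLeft F F (Subtype.val)) ∘ₗ (f ∘ₗ (T ∘ₗ E)) with hf'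
    have hf'apply : ∀ b, f' b = fun i : {i : ι // u i = 0} => f (T (E b)) i.val := fun _ => rfl
    have hkey : ∀ b : Fin k → F, b ≠ 0 → cdiv (wt u) q ≤ wt (f' b) := by
      intro b hb
      set x := T (E b) with hx
      have hyp : ∀ α : F, f x ≠ α • u → wt u ≤ wt (f x - α • u) := by
        intro α hne'
        have hxc : x - α • c ≠ 0 := by
          intro h0
          apply hne'
          have hxac : x = α • c := by rwa [sub_eq_zero] at h0
          rw [hxac, map_smul]
        have heq : f x - α • u = f (x - α • c) := by rw [map_sub, map_smul]
        rw [heq]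
        exact hcmin' _ hxc
      have hres := residual_key u (f x) hw1 hyp
      rcases hres with ⟨α, hα⟩ | hres
      · exfalso
        have hxac : x = α • c := hinj (by rw [hα, map_smul])
        have hEb : E b = α • (Pi.single i0 (1:F) : Fin (k+1) → F) := hTinj (by rw [← hx, hxac, ← hTc, ← map_smul])
        apply hb
        funext j
        have := congrFun hEb (i0.succAbove j)
        simpa [hEapply, Fin.insertNth_apply_succAbove,
          Pi.single_eq_of_ne (Fin.succAbove_ne i0 j)] using this
      · exact hres
    have hinj' : Function.Injective f' := by
      have h0 : ∀ b, f' b = 0 → b = 0 := by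
        intro b hb
        by_contra hbne
        have hk := hkey b hbne
        rw [hb] at hk
        have hwt0 : wt (0 : ({i : ι // u i = 0}) → F) = 0 := by
          rw [wt]
          simp
        have he1 : 1 ≤ cdiv (wt u) q := by rw [cdiv, Nat.one_le_div_iff hq1]; omega
        omega
      intro b1 b2 h12
      have := h0 (b1 - b2) (by rw [map_sub, h12, sub_self])
      exact sub_eq_zero.mp this
    have hIH := ih (cdiv (wt u) q) f' hinj' (fun b hb => hkey b hb)
    have hcard : Fintype.card {i : ι // u i = 0} + wt u = Fintype.card ι := by
      rw [wt, Nat.card_eq_fintype_card, Fintype.card_subtype, Fintype.card_subtype]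
      have h := Finset.card_filter_add_card_filter_not
        (s := (Finset.univ : Finset ι)) (fun i => u i = 0)
      simpa [Finset.card_univ] using h
    calc gbound q (k+1) d ≤ gbound q (k+1) (wt u) := gbound_mono q (k+1) hdw
      _ = wt u + gbound q k (cdiv (wt u) q) := by
          rw [gbound_eq, gbound_succ q hq1, ← gbound_eq]
      _ ≤ wt u + Fintype.card {i : ι // u i = 0} := Nat.add_le_add_left hIH _
      _ = Fintype.card ι := by omega

lemma geom (q : ℕ) (hq : 1 ≤ q) :
    ∀ k, (q - 1) * (∑ j ∈ Finset.range k, q ^ j) + 1 = q ^ k := by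
  intro k
  induction k with
  | zero => simp
  | succ k ih =>
    rw [Finset.sum_range_succ, Nat.mul_add, pow_succ]
    have h : (q - 1) * q ^ k + q ^ k = q ^ k * q := by zify [hq]; ring
    omega

theorem stmt4 {F : Type*} [Field F] [Fintype F] {n k d : ℕ}
    (G : Matrix (Fin k) (Fin n) F)
    (hinj : Function.Injective fun a : Fin k → F => Matrix.vecMul a G)
    (hcol : ∀ j, (fun i => G i j) ≠ 0)
    (hn : n = gbound (Fintype.card F) k d)
    (hmin : ∀ a : Fin k → F, a ≠ 0 → d ≤ wt (Matrix.vecMul a G))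
    (hex : ∃ a : Fin k → F, a ≠ 0 ∧ wt (Matrix.vecMul a G) = d) :
    (∀ j j' : Fin n, j ≠ j' →
        ¬ ∃ lam : F, lam ≠ 0 ∧ (fun i => G i j) = lam • (fun i => G i j')) ↔
      d ≤ Fintype.card F ^ (k - 1) := by
  classical
  set q := Fintype.card F with hq
  have hq2 : 2 ≤ q := Fintype.one_lt_card
  obtain ⟨a0, ha0, hwa0⟩ := hex
  have hvne : Matrix.vecMul a0 G ≠ 0 := fun h =>
    ha0 (hinj (h.trans (Matrix.zero_vecMul G).symm))
  have hd1 : 1 ≤ d := hwa0 ▸ wt_pos hvne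
  obtain ⟨k', rfl⟩ : ∃ k', k = k' + 1 := by
    rcases k with _ | k'
    · exact absurd (Subsingleton.elim a0 0) ha0
    · exact ⟨k', rfl⟩
  simp only [Nat.add_sub_cancel]
  set col : Fin n → (Fin (k'+1) → F) := fun j i => G i j with hcoldef
  constructor
  · -- projective → d ≤ q ^ k'
    intro hproj
    by_contra hlt
    push_neg at hlt
    have hdge : q ^ k' + 1 ≤ d := hlt
    have hΦ : Function.Injective (fun p : Fin n × Fˣ =>
        (⟨(p.2 : F) • col p.1, smul_ne_zero (Units.ne_zero _) (hcol p.1)⟩ :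
          {v : Fin (k'+1) → F // v ≠ 0})) := by
      rintro ⟨j, lam⟩ ⟨j', mu⟩ hpe
      simp only [Subtype.mk.injEq] at hpe
      by_cases hjj : j = j'
      · subst hjj
        have h1 : ((lam : F) - mu) • col j = 0 := by rw [sub_smul, hpe, sub_self]
        rcases smul_eq_zero.mp h1 with h | h
        · have : lam = mu := Units.ext (sub_eq_zero.mp h)
          rw [this]
        · exact absurd h (hcol j)
      · exfalso
        apply hproj j j' hjj
        refine ⟨(lam : F)⁻¹ * mu, mul_ne_zero (inv_ne_zero (Units.ne_zero lam)) (Units.ne_zero mu), ?_⟩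
        show col j = ((lam : F)⁻¹ * (mu : F)) • col j'
        rw [mul_smul, ← hpe, inv_smul_smul₀ (Units.ne_zero lam)]
    have hcard1 : n * (q - 1) ≤ q ^ (k' + 1) - 1 := by
      have h := Fintype.card_le_of_injective _ hΦ
      rw [Fintype.card_prod, Fintype.card_fin, Fintype.card_units] at h
      have hsub : Fintype.card {v : Fin (k'+1) → F // v ≠ 0} = q ^ (k'+1) - 1 := by
        have h1 : Fintype.card {v : Fin (k'+1) → F // v ≠ 0} =
            Fintype.card {v : Fin (k'+1) → F // ¬ v = 0} := rfl
        rw [h1, Fintype.card_subtype_compl, Fintype.card_subtype_eq,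
          Fintype.card_fun, Fintype.card_fin]
      rw [hsub] at h
      exact h
    have hnlb : k' + 1 + (∑ j ∈ Finset.range (k'+1), q ^ j) ≤ n := by
      rw [hn, gbound]
      calc k' + 1 + (∑ j ∈ Finset.range (k'+1), q ^ j)
          = ∑ i ∈ Finset.range (k'+1), (q ^ (k' - i) + 1) := by
            rw [Finset.sum_add_distrib, Finset.sum_const, Finset.card_range, smul_eq_mul,
              mul_one, ← Finset.sum_range_reflect (fun j => q ^ j) (k'+1)]
            simp only [Nat.add_sub_cancel]
            omega
        _ ≤ ∑ i ∈ Finset.range (k'+1), (d + q ^ i - 1) / q ^ i := by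
            apply Finset.sum_le_sum
            intro i hi
            have hik : i ≤ k' := by
              simp only [Finset.mem_range] at hi; omega
            have hqi : 0 < q ^ i := pow_pos (by omega) i
            rw [Nat.le_div_iff_mul_le hqi, add_mul, one_mul, ← pow_add]
            have : k' - i + i = k' := by omega
            rw [this]
            have hqk : 1 ≤ q ^ k' := Nat.one_le_pow _ _ (by omega)
            omega
    exfalso
    set S := ∑ j ∈ Finset.range (k'+1), q ^ j with hS
    have hgeom : (q - 1) * S + 1 = q ^ (k'+1) := geom q (by omega) (k'+1)
    have h5 := Nat.mul_le_mul_right (q - 1) hnlb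
    rw [add_mul] at h5
    have h6 : (k' + 1) * (q - 1) ≥ 1 := Nat.one_le_iff_ne_zero.mpr
      (Nat.mul_ne_zero (by omega) (by omega))
    have h7 : S * (q - 1) = (q - 1) * S := mul_comm _ _
    omega
  · -- d ≤ q ^ k' → projective
    rintro hdle j j' hjj ⟨lam, hlam, hprop⟩
    set P : Fin (k'+1) → F := col j' with hP
    set ℓ : (Fin (k'+1) → F) →ₗ[F] F :=
      { toFun := fun a => dotProduct a P
        map_add' := fun a b => add_dotProduct a b P
        map_smul' := fun m a => smul_dotProduct m a P } with hℓ
    obtain ⟨g, hginj0, hgker⟩ := exists_inj_ker ℓ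
    set Qp : Fin n → Prop := fun i => ∃ μ : F, col i = μ • P with hQp
    have hQj' : Qp j' := ⟨1, (one_smul F P).symm⟩
    have hQj : Qp j := ⟨lam, hprop⟩
    have hvan : ∀ a : Fin (k'+1) → F, a ∈ LinearMap.ker ℓ →
        ∀ i, Qp i → Matrix.vecMul a G i = 0 := by
      rintro a ha i ⟨μ, hμ⟩
      have h1 : Matrix.vecMul a G i = dotProduct a (col i) := rfl
      rw [h1, hμ, dotProduct_smul]
      have h2 : dotProduct a P = 0 := LinearMap.mem_ker.mp ha
      rw [h2, smul_eq_mul, mul_zero]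
    set f2 : (Fin k' → F) →ₗ[F] ({i : Fin n // ¬ Qp i} → F) :=
      (LinearMap.funLeft F F Subtype.val) ∘ₗ ((Matrix.vecMulLinear G) ∘ₗ g) with hf2
    have hf2apply : ∀ b, f2 b = fun i : {i : Fin n // ¬ Qp i} => Matrix.vecMul (g b) G i.val := by
      intro b
      funext i
      simp [hf2, LinearMap.funLeft, Matrix.vecMulLinear_apply]
    have hwtf2 : ∀ b, wt (f2 b) = wt (Matrix.vecMul (g b) G) := by
      intro b
      rw [hf2apply, wt_restrict, wt]
      apply Nat.card_congr
      exact Equiv.subtypeEquivRight (fun i =>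
        ⟨fun h => h.2, fun h => ⟨fun hq => h (hvan (g b) (hgker b) i hq), h⟩⟩)
    have hf2w : ∀ b : Fin k' → F, b ≠ 0 → d ≤ wt (f2 b) := by
      intro b hb
      rw [hwtf2]
      exact hmin _ (fun h => hb (hginj0 b h))
    have hf2inj : Function.Injective f2 := by
      have h0 : ∀ b, f2 b = 0 → b = 0 := by
        intro b hb
        apply hginj0
        apply hinj
        show Matrix.vecMul (g b) G = Matrix.vecMul 0 G
        rw [Matrix.zero_vecMul]
        funext i
        by_cases hQ : Qp i
        · exact hvan (g b) (hgker b) i hQ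
        · have := congrFun hb ⟨i, hQ⟩
          rw [hf2apply] at this
          exact this
      intro b1 b2 h12
      have := h0 (b1 - b2) (by rw [map_sub, h12, sub_self])
      exact sub_eq_zero.mp this
    have hgb := griesmer k' d f2 hf2inj hf2w
    have hc2 : Fintype.card {i : Fin n // ¬ Qp i} + 2 ≤ n := by
      rw [Fintype.card_subtype]
      have hjsub : ({j, j'} : Finset (Fin n)) ⊆ Finset.univ.filter Qp := by
        intro x hx
        rcases Finset.mem_insert.mp hx with rfl | hx'
        · simp [Finset.mem_filter, hQj]
        · rw [Finset.mem_singleton.mp hx']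
          simp [Finset.mem_filter, hQj']
      have h2 : 2 ≤ (Finset.univ.filter Qp).card := by
        have := Finset.card_le_card hjsub
        rwa [Finset.card_pair hjj] at this
      have h3 := Finset.card_filter_add_card_filter_not
        (s := (Finset.univ : Finset (Fin n))) Qp
      rw [Finset.card_univ, Fintype.card_fin] at h3
      omega
    have hsplit : gbound q (k'+1) d = gbound q k' d + (d + q ^ k' - 1) / q ^ k' := by
      simp [gbound, Finset.sum_range_succ]
    have hlast : (d + q ^ k' - 1) / q ^ k' ≤ 1 := by
      have hp : 0 < q ^ k' := pow_pos (by omega) k'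
      have hx : d + q ^ k' - 1 < 2 * q ^ k' := by omega
      exact Nat.lt_succ_iff.mp ((Nat.div_lt_iff_lt_mul hp).mpr hx)
    rw [← hq] at hgb
    omega
end

section
/- Let C be a Griesmer [g_q(k,d),k,d] code over F_q with q not dividing d, write d = d_1 q + d_0 with 1 ≤ d_0 ≤ q−1, let a be a minimum weight codeword and c' a minimum weight codeword of Res(C,a). Then there exist at least d_0 preimages b of c' under the puncturing map with wt(b) = d; in particular at least one such preimage exists. -/
open Classical in
lemma wt_eq_card {ι F : Type*} [Fintype ι] [Zero F] (c : ι → F) :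
    wt c = (Finset.univ.filter fun i => c i ≠ 0).card := by
  rw [wt, Nat.card_eq_fintype_card]
  convert Fintype.card_subtype (fun i => c i ≠ 0)

theorem stmt9 {F : Type*} [Field F] [Fintype F] {n k d d₀ d₁ : ℕ}
    (C : Submodule F (Fin n → F))
    (hk : Module.finrank F C = k)
    (hn : n = gbound (Fintype.card F) k d)
    (hmin : ∀ c ∈ C, c ≠ 0 → d ≤ wt c)
    (hex : ∃ c ∈ C, c ≠ 0 ∧ wt c = d)
    (hqd : ¬ Fintype.card F ∣ d)
    (hdecomp : d = d₁ * Fintype.card F + d₀)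
    (hd₀₁ : 1 ≤ d₀) (hd₀₂ : d₀ ≤ Fintype.card F - 1)
    (a : Fin n → F) (haC : a ∈ C) (haw : wt a = d)
    (c' : {i : Fin n // a i = 0} → F)
    (hc'mem : ∃ b ∈ C, (fun i : {i : Fin n // a i = 0} => b i) = c')
    (hc'wt : wt c' = (d + Fintype.card F - 1) / Fintype.card F) :
    d₀ ≤ Nat.card {b : Fin n → F //
        b ∈ C ∧ (fun i : {i : Fin n // a i = 0} => b i) = c' ∧ wt b = d} ∧
    ∃ b ∈ C, (fun i : {i : Fin n // a i = 0} => b i) = c' ∧ wt b = d := by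
  classical
  obtain ⟨b, hbC, hbc'⟩ := hc'mem
  subst hbc'
  set q := Fintype.card F with hq
  have hq2 : 2 ≤ q := Fintype.one_lt_card
  have hdq : (d₁ + 1) * q = d₁ * q + q := by ring
  have hd1 : (d + q - 1) / q = d₁ + 1 := by
    have h1 : d + q - 1 = (d₀ - 1) + (d₁ + 1) * q := by omega
    rw [h1, Nat.add_mul_div_right _ _ (by omega : 0 < q), Nat.div_eq_of_lt (by omega)]
    omega
  set S : Finset (Fin n) := Finset.univ.filter (fun i => a i ≠ 0) with hS
  have hScard : S.card = d := by rw [← haw, wt_eq_card]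
  set T : F → Finset (Fin n) := fun μ => S.filter (fun i => b i + μ * a i = 0) with hT
  have hTsub : ∀ μ, T μ ⊆ S := fun μ => Finset.filter_subset _ _
  -- sum of fiber sizes over μ equals d
  have hsum : ∑ μ : F, (T μ).card = d := by
    have h1 : ∀ μ : F, (T μ).card = ∑ i ∈ S, if b i + μ * a i = 0 then 1 else 0 :=
      fun μ => Finset.card_filter _ _
    rw [Finset.sum_congr rfl (fun μ _ => h1 μ), Finset.sum_comm]
    have h2 : ∀ i ∈ S, (∑ μ : F, if b i + μ * a i = 0 then 1 else 0) = 1 := by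
      intro i hi
      have ha : a i ≠ 0 := by
        have := Finset.mem_filter.mp hi
        exact this.2
      rw [← Finset.card_filter]
      have heq : (Finset.univ.filter fun μ : F => b i + μ * a i = 0) = {-(b i) / a i} := by
        ext μ
        simp only [Finset.mem_filter, Finset.mem_univ, true_and, Finset.mem_singleton]
        rw [eq_div_iff ha]
        constructor
        · intro h; linear_combination h
        · intro h; linear_combination h
      rw [heq, Finset.card_singleton]
    rw [Finset.sum_congr rfl h2, Finset.sum_const, smul_eq_mul, mul_one, hScard]
  -- the candidate codewords
  set v : F → (Fin n → F) := fun μ => b + μ • a with hv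
  have hvC : ∀ μ, v μ ∈ C := fun μ => C.add_mem hbC (C.smul_mem μ haC)
  have hvapp : ∀ μ i, v μ i = b i + μ * a i := by intro μ i; simp [hv]
  have hvres : ∀ μ, (fun i : {i : Fin n // a i = 0} => v μ i) =
      (fun i : {i : Fin n // a i = 0} => b i) := by
    intro μ
    funext i
    rw [hvapp, i.2, mul_zero, add_zero]
  -- residual weight as a count over Fin n
  have hreswt : wt (fun i : {i : Fin n // a i = 0} => b i) =
      (Finset.univ.filter (fun i => a i = 0 ∧ b i ≠ 0)).card := by
    rw [wt]
    rw [Nat.card_congr (Equiv.subtypeSubtypeEquivSubtypeInter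
      (fun i : Fin n => a i = 0) (fun i => b i ≠ 0))]
    rw [Nat.card_eq_fintype_card]
    convert Fintype.card_subtype (fun i => a i = 0 ∧ b i ≠ 0)
  have hc'ne : (fun i : {i : Fin n // a i = 0} => b i) ≠ 0 := by
    intro h
    rw [h] at hc'wt
    have : wt (0 : {i : Fin n // a i = 0} → F) = 0 := by
      rw [wt_eq_card]; simp
    omega
  have hvne : ∀ μ, v μ ≠ 0 := by
    intro μ h
    apply hc'ne
    rw [← hvres μ, h]
    rfl
  -- weight computation
  have hwtv : ∀ μ, wt (v μ) = (d₁ + 1) + (d - (T μ).card) := by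
    intro μ
    rw [wt_eq_card]
    have hsplit :
        ((Finset.univ.filter fun i => v μ i ≠ 0).filter (fun i => a i = 0)).card +
        ((Finset.univ.filter fun i => v μ i ≠ 0).filter (fun i => ¬ a i = 0)).card =
        (Finset.univ.filter fun i => v μ i ≠ 0).card :=
      Finset.card_filter_add_card_filter_not _
    rw [← hsplit]
    have e1 : ((Finset.univ.filter fun i => v μ i ≠ 0).filter (fun i => a i = 0)).card
        = d₁ + 1 := by
      have h1 : ((Finset.univ.filter fun i => v μ i ≠ 0).filter (fun i => a i = 0)) =
          Finset.univ.filter (fun i => a i = 0 ∧ b i ≠ 0) := by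
        ext i
        simp only [Finset.mem_filter, Finset.mem_univ, true_and]
        constructor
        · rintro ⟨h1, h2⟩
          refine ⟨h2, ?_⟩
          rwa [hvapp, h2, mul_zero, add_zero] at h1
        · rintro ⟨h2, h1⟩
          exact ⟨by rwa [hvapp, h2, mul_zero, add_zero], h2⟩
      rw [h1, ← hreswt, hc'wt, hd1]
    have e2 : ((Finset.univ.filter fun i => v μ i ≠ 0).filter (fun i => ¬ a i = 0)).card
        = d - (T μ).card := by
      have h1 : ((Finset.univ.filter fun i => v μ i ≠ 0).filter (fun i => ¬ a i = 0)) =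
          S.filter (fun i => ¬ (b i + μ * a i = 0)) := by
        ext i
        simp only [Finset.mem_filter, Finset.mem_univ, true_and, hS, hvapp]
        tauto
      have h2 := Finset.card_filter_add_card_filter_not
        (s := S) (p := fun i => b i + μ * a i = 0)
      have h3 : (S.filter (fun i => b i + μ * a i = 0)).card = (T μ).card := rfl
      rw [h1]
      omega
    rw [e1, e2]
  have hTled : ∀ μ, (T μ).card ≤ d := fun μ =>
    hScard ▸ Finset.card_le_card (hTsub μ)
  have hTle : ∀ μ, (T μ).card ≤ d₁ + 1 := by
    intro μ
    have h1 := hmin (v μ) (hvC μ) (hvne μ)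
    have h2 := hwtv μ
    have h3 := hTled μ
    omega
  set M : Finset F := Finset.univ.filter (fun μ => (T μ).card = d₁ + 1) with hM
  have hMq : M.card ≤ q := by
    rw [hq, ← Finset.card_univ]
    exact Finset.card_le_card (Finset.subset_univ M)
  have hMcard : d₀ ≤ M.card := by
    have hsplit : ∑ μ ∈ M, (T μ).card + ∑ μ ∈ Finset.univ \ M, (T μ).card = d := by
      rw [← hsum, add_comm]
      exact Finset.sum_sdiff (Finset.subset_univ M)
    have h1 : ∑ μ ∈ M, (T μ).card = M.card * (d₁ + 1) := by
      rw [Finset.sum_congr rfl (fun μ hμ => (Finset.mem_filter.mp hμ).2),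
        Finset.sum_const, smul_eq_mul]
    have h2 : ∑ μ ∈ Finset.univ \ M, (T μ).card ≤ (q - M.card) * d₁ := by
      have hb : ∀ μ ∈ Finset.univ \ M, (T μ).card ≤ d₁ := by
        intro μ hμ
        have h3 := hTle μ
        have h4 : ¬ (T μ).card = d₁ + 1 := by
          have := (Finset.mem_sdiff.mp hμ).2
          simpa [hM] using this
        omega
      calc ∑ μ ∈ Finset.univ \ M, (T μ).card ≤ (Finset.univ \ M).card * d₁ :=
            Finset.sum_le_card_nsmul _ _ _ hb
        _ = (q - M.card) * d₁ := by
            rw [Finset.card_sdiff_of_subset (Finset.subset_univ M), Finset.card_univ]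
    obtain ⟨t, ht⟩ : ∃ t, q = M.card + t := ⟨q - M.card, by omega⟩
    have key : M.card * (d₁ + 1) + (q - M.card) * d₁ = M.card + d₁ * q := by
      rw [ht]
      have : M.card + t - M.card = t := by omega
      rw [this]
      ring
    omega
  -- an index where a is nonzero (for injectivity)
  obtain ⟨i₀, hi₀⟩ : ∃ i, a i ≠ 0 := by
    by_contra h
    push_neg at h
    have ha0 : a = 0 := funext h
    rw [ha0] at haw
    have : wt (0 : Fin n → F) = 0 := by rw [wt_eq_card]; simp
    omega
  have hgood : ∀ μ ∈ M, v μ ∈ C ∧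
      (fun i : {i : Fin n // a i = 0} => v μ i) = (fun i : {i : Fin n // a i = 0} => b i)
      ∧ wt (v μ) = d := by
    intro μ hμ
    refine ⟨hvC μ, hvres μ, ?_⟩
    have h1 := (Finset.mem_filter.mp hμ).2
    have h3 := hTled μ
    rw [hwtv μ, h1]
    omega
  have hinj : Function.Injective (fun μ : {μ // μ ∈ M} =>
      (⟨v μ.1, hgood μ.1 μ.2⟩ : {b' : Fin n → F // b' ∈ C ∧
        (fun i : {i : Fin n // a i = 0} => b' i) = (fun i : {i : Fin n // a i = 0} => b i)
        ∧ wt b' = d})) := by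
    rintro ⟨μ, hμ⟩ ⟨ν, hν⟩ h
    simp only [Subtype.mk.injEq] at h ⊢
    have h2 : v μ i₀ = v ν i₀ := by rw [h]
    rw [hvapp, hvapp] at h2
    have h3 : μ * a i₀ = ν * a i₀ := by
      have := add_left_cancel h2
      exact this
    exact mul_right_cancel₀ hi₀ h3
  have hcard : M.card ≤ Nat.card {b' : Fin n → F // b' ∈ C ∧
      (fun i : {i : Fin n // a i = 0} => b' i) = (fun i : {i : Fin n // a i = 0} => b i)
      ∧ wt b' = d} := by
    have := Nat.card_le_card_of_injective _ hinj
    rwa [Nat.card_eq_fintype_card, Fintype.card_coe] at this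
  have hMne : M.Nonempty := Finset.card_pos.mp (lt_of_lt_of_le hd₀₁ hMcard)
  obtain ⟨μ, hμ⟩ := hMne
  obtain ⟨h1, h2, h3⟩ := hgood μ hμ
  exact ⟨le_trans hMcard hcard, v μ, h1, h2, h3⟩
end
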